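/- arXiv:2503.20380 — 3 statements merged into one kernel-verified Lean document; each statement's English description precedes it below -/
import Mathlib

section
/- For all real numbers u, v ≥ 0 and any real z, and any exponent q with 1 < q ≤ 2, one has |u + v + z|^q - u^q - v^q ≤ q·|z|·(u+v)^(q-1) + |z|^q + q·v·u^(q-1). -/
open Real

lemma rpow_subadd_aux {p a b : ℝ} (ha : 0 ≤ a) (hb : 0 ≤ b) (hp : 0 ≤ p) (hp1 : p ≤ 1) :
    (a + b) ^ p ≤ a ^ p + b ^ p := by
  have h := NNReal.rpow_add_le_add_rpow a.toNNReal b.toNNReal hp hp1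
  have := NNReal.coe_le_coe.2 h
  push_cast at this
  rwa [Real.coe_toNNReal a ha, Real.coe_toNNReal b hb] at this

lemma key_ineq {a b q : ℝ} (ha : 0 ≤ a) (hb : 0 ≤ b) (hq1 : 1 < q) (hq2 : q ≤ 2) :
    (a + b) ^ q ≤ a ^ q + q * a ^ (q - 1) * b + b ^ q := by
  have hq0 : (0:ℝ) < q := lt_trans one_pos hq1
  set f : ℝ → ℝ := fun t => a ^ q + q * a ^ (q - 1) * t + t ^ q - (a + t) ^ q with hf
  have hdiff : ∀ t ∈ Set.Ici (0:ℝ), HasDerivAt f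
      (q * a ^ (q - 1) + q * t ^ (q - 1) - q * (a + t) ^ (q - 1)) t := by
    intro t ht
    have h1 : HasDerivAt (fun t : ℝ => t ^ q) (q * t ^ (q - 1)) t := by
      have := Real.hasDerivAt_rpow_const (x := t) (p := q) (Or.inr hq1.le)
      simpa [mul_comm] using this
    have h2 : HasDerivAt (fun t : ℝ => (a + t) ^ q) (q * (a + t) ^ (q - 1)) t := by
      have hb' : HasDerivAt (fun t : ℝ => a + t) 1 t := by
        simpa using (hasDerivAt_id t).const_add a
      have := (Real.hasDerivAt_rpow_const (x := a + t) (p := q) (Or.inr hq1.le)).comp t hb'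
      simpa [mul_comm, Function.comp_def] using this
    have h3 : HasDerivAt (fun t : ℝ => a ^ q + q * a ^ (q - 1) * t)
        (q * a ^ (q - 1)) t := by
      simpa using ((hasDerivAt_id t).const_mul (q * a ^ (q - 1))).const_add (a ^ q)
    exact (h3.add h1).sub h2
  have hmono : MonotoneOn f (Set.Ici (0:ℝ)) := by
    apply monotoneOn_of_deriv_nonneg (convex_Ici 0)
    · exact continuousOn_of_forall_continuousAt fun t ht => (hdiff t ht).continuousAt
    · intro t ht
      rw [interior_Ici] at ht
      exact (hdiff t (Set.mem_Ici.2 (le_of_lt ht))).differentiableAt.differentiableWithinAt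
    · intro t ht
      rw [interior_Ici] at ht
      have ht0 : (0:ℝ) ≤ t := le_of_lt ht
      rw [(hdiff t ht0).deriv]
      have hsub : (a + t) ^ (q - 1) ≤ a ^ (q - 1) + t ^ (q - 1) :=
        rpow_subadd_aux ha ht0 (by linarith) (by linarith)
      nlinarith [hsub, hq0]
  have h0 : f 0 = 0 := by
    simp [hf, Real.zero_rpow (ne_of_gt hq0)]
  have := hmono (Set.self_mem_Ici) (Set.mem_Ici.2 hb) hb
  rw [h0] at this
  simp only [hf] at this
  linarith

theorem stmt_0 (u v z q : ℝ) (hu : 0 ≤ u) (hv : 0 ≤ v) (hq1 : 1 < q) (hq2 : q ≤ 2) :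
    |u + v + z| ^ q - u ^ q - v ^ q ≤
      q * |z| * (u + v) ^ (q - 1) + |z| ^ q + q * v * u ^ (q - 1) := by
  have habs : |u + v + z| ≤ (u + v) + |z| := by
    calc |u + v + z| ≤ |u + v| + |z| := abs_add_le _ _
    _ = (u + v) + |z| := by rw [abs_of_nonneg (by linarith)]
  have h1 : |u + v + z| ^ q ≤ ((u + v) + |z|) ^ q :=
    Real.rpow_le_rpow (abs_nonneg _) habs (le_of_lt (lt_trans one_pos hq1))
  have h2 : ((u + v) + |z|) ^ q ≤ (u + v) ^ q + q * (u + v) ^ (q - 1) * |z| + |z| ^ q :=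
    key_ineq (by linarith) (abs_nonneg z) hq1 hq2
  have h3 : (u + v) ^ q ≤ u ^ q + q * u ^ (q - 1) * v + v ^ q :=
    key_ineq hu hv hq1 hq2
  nlinarith [h1, h2, h3]
end

section
/- Let (ξ, ξ*) be i.i.d. real random variables, κ > 0, ρ ∈ (0,1), and set c = ρ^{-1/2}. For nonnegative integers a ≤ b define τ(a,b) = ∑_{i ≥ a} ∑_{j ≥ b} E(min(κ ρ^{i+j} |ξ − ξ*|, 1)). Then there exists a constant K > 0 (depending on κ and ρ) such that τ(a,b) ≤ K ρ^{(a+b)/2} + K · E((log|ξ − ξ*|)² · 1_{log|ξ − ξ*| > max(a,b)·log c}). -/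
open MeasureTheory ProbabilityTheory
open scoped ENNReal

private lemma ennreal_tsum_shift (f : ℕ → ℝ≥0∞) (k : ℕ) :
    ∑' i, f i = ∑ i ∈ Finset.range k, f i + ∑' i, f (i + k) :=
  (Summable.sum_add_tsum_nat_add' (f := f) (k := k) ENNReal.summable).symm

private lemma tsum_ofReal_pow_sub {ρ : ℝ} (h0 : 0 < ρ) (h1 : ρ < 1) (m : ℕ) :
    (∑' i : ℕ, ENNReal.ofReal (ρ ^ (i - m))) ≤ (m : ℝ≥0∞) + ENNReal.ofReal ((1 - ρ)⁻¹) := by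
  rw [ennreal_tsum_shift _ m]
  have h₁ : ∑ i ∈ Finset.range m, ENNReal.ofReal (ρ ^ (i - m)) = m := by
    have h : ∀ i ∈ Finset.range m, ENNReal.ofReal (ρ ^ (i - m)) = 1 := by
      intro i hi
      rw [Nat.sub_eq_zero_of_le (Finset.mem_range.1 hi).le, pow_zero, ENNReal.ofReal_one]
    rw [Finset.sum_congr rfl h]
    simp
  have h₂ : (∑' i : ℕ, ENNReal.ofReal (ρ ^ (i + m - m))) = ENNReal.ofReal ((1 - ρ)⁻¹) := by
    have : ∀ i : ℕ, ENNReal.ofReal (ρ ^ (i + m - m)) = ENNReal.ofReal ρ ^ i := by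
      intro i
      rw [Nat.add_sub_cancel, ENNReal.ofReal_pow h0.le]
    rw [tsum_congr this, ENNReal.tsum_geometric, ← ENNReal.ofReal_one,
      ← ENNReal.ofReal_sub _ h0.le, ← ENNReal.ofReal_inv_of_pos (by linarith)]
  rw [h₁, h₂]

private lemma double_sum_le {ρ : ℝ} (h0 : 0 < ρ) (h1 : ρ < 1) {s : ℝ} (hs : 0 ≤ s)
    {m : ℕ} (hm : s * ρ ^ m ≤ 1) :
    (∑' i : ℕ, ∑' j : ℕ, ENNReal.ofReal (min (s * ρ ^ (i + j)) 1)) ≤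
      ((m : ℝ≥0∞) + ENNReal.ofReal ((1 - ρ)⁻¹)) ^ 2 := by
  have key : ∀ i j : ℕ, ENNReal.ofReal (min (s * ρ ^ (i + j)) 1) ≤
      ENNReal.ofReal (ρ ^ (i - m)) * ENNReal.ofReal (ρ ^ (j - m)) := by
    intro i j
    rw [← ENNReal.ofReal_mul (by positivity)]
    apply ENNReal.ofReal_le_ofReal
    rw [← pow_add]
    rcases le_or_gt (i + j) m with h | h
    · have hi : i - m = 0 := by omega
      have hj : j - m = 0 := by omega
      rw [hi, hj]
      simpa using min_le_right (s * ρ ^ (i + j)) 1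
    · have h3 : (i - m) + (j - m) ≤ (i + j) - m := by omega
      have h4 : ρ ^ ((i + j) - m) ≤ ρ ^ ((i - m) + (j - m)) :=
        pow_le_pow_of_le_one h0.le h1.le h3
      calc min (s * ρ ^ (i + j)) 1 ≤ s * ρ ^ (i + j) := min_le_left _ _
        _ = (s * ρ ^ m) * ρ ^ ((i + j) - m) := by
            rw [mul_assoc, ← pow_add]
            congr 2
            omega
        _ ≤ 1 * ρ ^ ((i + j) - m) := by
            apply mul_le_mul_of_nonneg_right hm (by positivity)
        _ ≤ ρ ^ ((i - m) + (j - m)) := by rw [one_mul]; exact h4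
  calc (∑' i : ℕ, ∑' j : ℕ, ENNReal.ofReal (min (s * ρ ^ (i + j)) 1))
      ≤ ∑' i : ℕ, ∑' j : ℕ, ENNReal.ofReal (ρ ^ (i - m)) * ENNReal.ofReal (ρ ^ (j - m)) :=
        ENNReal.tsum_le_tsum fun i => ENNReal.tsum_le_tsum fun j => key i j
    _ = (∑' i : ℕ, ENNReal.ofReal (ρ ^ (i - m))) * (∑' j : ℕ, ENNReal.ofReal (ρ ^ (j - m))) := by
        simp_rw [ENNReal.tsum_mul_left, ENNReal.tsum_mul_right]
    _ ≤ ((m : ℝ≥0∞) + ENNReal.ofReal ((1 - ρ)⁻¹)) ^ 2 := by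
        rw [sq]
        exact mul_le_mul' (tsum_ofReal_pow_sub h0 h1 m) (tsum_ofReal_pow_sub h0 h1 m)

private lemma choose_m {ρ : ℝ} (h0 : 0 < ρ) (h1 : ρ < 1) {s : ℝ} (hs : 0 ≤ s) :
    ∃ m : ℕ, s * ρ ^ m ≤ 1 ∧ (m : ℝ) ≤ max (Real.log s) 0 / (-Real.log ρ) + 1 := by
  have hlam : 0 < -Real.log ρ := by
    have := Real.log_neg h0 h1; linarith
  refine ⟨⌈max (Real.log s) 0 / (-Real.log ρ)⌉₊, ?_, ?_⟩
  · rcases hs.eq_or_lt with h | hspos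
    · rw [← h, zero_mul]; norm_num
    · have hρm : (0:ℝ) < ρ ^ ⌈max (Real.log s) 0 / (-Real.log ρ)⌉₊ := pow_pos h0 _
      have hceil : max (Real.log s) 0 / (-Real.log ρ) ≤
          (⌈max (Real.log s) 0 / (-Real.log ρ)⌉₊ : ℝ) := Nat.le_ceil _
      have hmax : max (Real.log s) 0 ≤ (⌈max (Real.log s) 0 / (-Real.log ρ)⌉₊ : ℝ) *
          (-Real.log ρ) := (div_le_iff₀ hlam).mp hceil
      have hle : Real.log s + (⌈max (Real.log s) 0 / (-Real.log ρ)⌉₊ : ℝ) * Real.log ρ ≤ 0 := by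
        have := le_max_left (Real.log s) 0
        nlinarith
      calc s * ρ ^ ⌈max (Real.log s) 0 / (-Real.log ρ)⌉₊
          = Real.exp (Real.log s + (⌈max (Real.log s) 0 / (-Real.log ρ)⌉₊ : ℝ) * Real.log ρ) := by
            rw [Real.exp_add, Real.exp_log hspos]
            congr 1
            rw [← Real.log_pow, Real.exp_log hρm]
        _ ≤ Real.exp 0 := Real.exp_le_exp.2 hle
        _ = 1 := Real.exp_zero
  · exact (Nat.ceil_lt_add_one (by positivity)).le
set_option maxHeartbeats 1000000 in
theorem stmt_11 {Ω : Type*} [MeasurableSpace Ω] (μ : Measure Ω) [IsProbabilityMeasure μ]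
    (ξ ξstar : Ω → ℝ) (hmes : Measurable ξ) (hmes' : Measurable ξstar)
    (hindep : IndepFun ξ ξstar μ) (hid : IdentDistrib ξ ξstar μ μ)
    (κ ρ : ℝ) (hκ : 0 < κ) (hρ : ρ ∈ Set.Ioo (0 : ℝ) 1) :
    ∃ K : ℝ, 0 < K ∧ ∀ a b : ℕ, a ≤ b →
      (∑' i : ℕ, ∑' j : ℕ,
          ∫ x, min (κ * ρ ^ ((a + i) + (b + j)) * |ξ x - ξstar x|) 1 ∂μ) ≤
        K * ρ ^ (((a : ℝ) + b) / 2) +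
          K * ∫ x in {x | (max a b : ℝ) * Real.log (ρ ^ (-(1 : ℝ) / 2)) <
              Real.log |ξ x - ξstar x|}, (Real.log |ξ x - ξstar x|) ^ 2 ∂μ := by
  obtain ⟨hρ0, hρ1⟩ := hρ
  have hlam : (0:ℝ) < -Real.log ρ := by have := Real.log_neg hρ0 hρ1; linarith
  have h1ρ : (0:ℝ) < 1 - ρ := by linarith
  set lam : ℝ := -Real.log ρ with hlamdef
  have ht : Measurable fun x => |ξ x - ξstar x| := (hmes.sub hmes').abs
  have ht0 : ∀ x, (0:ℝ) ≤ |ξ x - ξstar x| := fun x => abs_nonneg _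
  have hlog : Measurable fun x => Real.log |ξ x - ξstar x| := Real.measurable_log.comp ht
  have hL : Real.log (ρ ^ (-(1:ℝ)/2)) = lam / 2 := by
    rw [Real.log_rpow hρ0, hlamdef]; ring
  set A2 : ℝ := max (Real.log κ) 0 / lam + (1 + (1 - ρ)⁻¹) with hA2def
  have hA2pos : 0 < A2 := by
    have h1 : 0 ≤ max (Real.log κ) 0 / lam := div_nonneg (le_max_right _ _) hlam.le
    have h2 : 0 < (1 - ρ)⁻¹ := inv_pos.2 h1ρ
    rw [hA2def]; linarith
  set K1 : ℝ := κ * ((1 - ρ)⁻¹)^2 + 2 * A2^2 with hK1def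
  set K2 : ℝ := 2 / lam^2 + 8 * A2^2 / lam^2 with hK2def
  have hK1pos : 0 < K1 := by
    have : 0 < κ * ((1 - ρ)⁻¹)^2 := by positivity
    rw [hK1def]; nlinarith [sq_nonneg A2]
  have hK2pos : 0 < K2 := by
    have h1 : 0 < 2 / lam^2 := by positivity
    have h2 : 0 ≤ 8 * A2^2 / lam^2 := by positivity
    rw [hK2def]; linarith
  refine ⟨K1 + K2 + 1, by linarith, ?_⟩
  intro a b hab
  have habR : (a:ℝ) ≤ (b:ℝ) := by exact_mod_cast hab
  set E : Set Ω := {x | (max a b : ℝ) * Real.log (ρ ^ (-(1 : ℝ) / 2)) <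
      Real.log |ξ x - ξstar x|} with hEdef
  have hEmeas : MeasurableSet E := measurableSet_lt measurable_const hlog
  have hEprop : ∀ x ∈ E, (b:ℝ) * (lam/2) < Real.log |ξ x - ξstar x| := by
    intro x hx
    rw [hEdef] at hx
    simp only [Set.mem_setOf_eq] at hx
    rwa [hL, sup_eq_right.2 habR] at hx
  have hEpos : ∀ x ∈ E, 0 < Real.log |ξ x - ξstar x| := by
    intro x hx
    have h := hEprop x hx
    have hb : (0:ℝ) ≤ (b:ℝ) * (lam/2) := by positivity
    linarith
  have hEgt1 : ∀ x ∈ E, 1 < |ξ x - ξstar x| := by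
    intro x hx
    by_contra h
    push_neg at h
    have := Real.log_nonpos (ht0 x) h
    linarith [hEpos x hx]
  set H : ℕ → ℝ≥0∞ :=
    fun n => ∫⁻ x, ENNReal.ofReal (min (κ * ρ ^ n * |ξ x - ξstar x|) 1) ∂μ with hHdef
  set I : ℝ≥0∞ := ∫⁻ x in E, ENNReal.ofReal ((Real.log |ξ x - ξstar x|) ^ 2) ∂μ with hIdef
  have hfmeas : ∀ n : ℕ, Measurable fun x => min (κ * ρ ^ n * |ξ x - ξstar x|) 1 :=
    fun n => ((ht.const_mul _).min measurable_const)
  have hFmeas : ∀ n : ℕ, Measurable fun x =>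
      ENNReal.ofReal (min (κ * ρ ^ n * |ξ x - ξstar x|) 1) :=
    fun n => (hfmeas n).ennreal_ofReal
  have hfnonneg : ∀ n : ℕ, ∀ x, 0 ≤ min (κ * ρ ^ n * |ξ x - ξstar x|) 1 :=
    fun n x => le_min (by positivity) zero_le_one
  have hH1 : ∀ n, H n ≤ 1 := by
    intro n
    rw [hHdef]
    calc ∫⁻ x, ENNReal.ofReal (min (κ * ρ ^ n * |ξ x - ξstar x|) 1) ∂μ
        ≤ ∫⁻ _, 1 ∂μ := lintegral_mono fun x => ENNReal.ofReal_le_one.2 (min_le_right _ _)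
      _ = 1 := by simp
  have hHne : ∀ n, H n ≠ ∞ := fun n => ((hH1 n).trans_lt ENNReal.one_lt_top).ne
  have hHanti : ∀ {n n' : ℕ}, n ≤ n' → H n' ≤ H n := by
    intro n n' hnn
    rw [hHdef]
    apply lintegral_mono
    intro x
    apply ENNReal.ofReal_le_ofReal
    apply min_le_min _ le_rfl
    exact mul_le_mul_of_nonneg_right
      (mul_le_mul_of_nonneg_left (pow_le_pow_of_le_one hρ0.le hρ1.le hnn) hκ.le) (ht0 x)
  have hint : ∀ n : ℕ, ∫ x, min (κ * ρ ^ n * |ξ x - ξstar x|) 1 ∂μ = (H n).toReal := by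
    intro n
    rw [hHdef]
    exact integral_eq_lintegral_of_nonneg_ae (ae_of_all _ (hfnonneg n))
      (hfmeas n).aestronglyMeasurable
  have hRHSint : ∫ x in E, (Real.log |ξ x - ξstar x|) ^ 2 ∂μ = I.toReal := by
    rw [hIdef]
    exact integral_eq_lintegral_of_nonneg_ae (ae_of_all _ fun x => sq_nonneg _)
      ((hlog.pow_const 2).aestronglyMeasurable)
  rw [hRHSint]
  simp only [hint]
  set T : ℕ → ℝ≥0∞ := fun i => ∑' j : ℕ, H ((a + i) + (b + j)) with hTdef
  have hLHS : (∑' i : ℕ, ∑' j : ℕ, (H ((a + i) + (b + j))).toReal) = ∑' i : ℕ, (T i).toReal := by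
    refine tsum_congr fun i => ?_
    simp only [hTdef]
    exact (ENNReal.tsum_toReal_eq fun j => hHne _).symm
  rw [hLHS]
  -- main ENNReal estimate
  have hsplit : ∀ n : ℕ, H n =
      (∫⁻ x in E, ENNReal.ofReal (min (κ * ρ ^ n * |ξ x - ξstar x|) 1) ∂μ)
      + ∫⁻ x in Eᶜ, ENNReal.ofReal (min (κ * ρ ^ n * |ξ x - ξstar x|) 1) ∂μ := by
    intro n; rw [hHdef]; exact (lintegral_add_compl _ hEmeas).symm
  have hΛsplit : (∑' i : ℕ, T i) =
      (∑' i : ℕ, ∑' j : ℕ, ∫⁻ x in E,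
        ENNReal.ofReal (min (κ * ρ ^ ((a + i) + (b + j)) * |ξ x - ξstar x|) 1) ∂μ)
      + (∑' i : ℕ, ∑' j : ℕ, ∫⁻ x in Eᶜ,
        ENNReal.ofReal (min (κ * ρ ^ ((a + i) + (b + j)) * |ξ x - ξstar x|) 1) ∂μ) := by
    rw [← ENNReal.tsum_add]
    refine tsum_congr fun i => ?_
    simp only [hTdef]
    rw [← ENNReal.tsum_add]
    exact tsum_congr fun j => hsplit _
  -- part on Eᶜ
  have hexp : Real.exp ((b:ℝ) * (lam/2)) = ρ ^ (-(b:ℝ)/2) := by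
    rw [Real.rpow_def_of_pos hρ0]
    congr 1
    rw [hlamdef]
    ring
  have hEc : ∀ x, x ∈ Eᶜ → ∀ i j : ℕ,
      min (κ * ρ ^ ((a + i) + (b + j)) * |ξ x - ξstar x|) 1 ≤
        (κ * ρ ^ (((a:ℝ) + b)/2)) * (ρ ^ i * ρ ^ j) := by
    intro x hx i j
    have hxE : x ∉ E := hx
    rw [hEdef] at hxE
    simp only [Set.mem_setOf_eq, not_lt] at hxE
    rw [hL, sup_eq_right.2 habR] at hxE
    have htle : |ξ x - ξstar x| ≤ Real.exp ((b:ℝ) * (lam/2)) := by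
      rcases (ht0 x).eq_or_lt with h | h
      · rw [← h]; positivity
      · calc |ξ x - ξstar x| = Real.exp (Real.log |ξ x - ξstar x|) := (Real.exp_log h).symm
          _ ≤ _ := Real.exp_le_exp.2 hxE
    calc min (κ * ρ ^ ((a + i) + (b + j)) * |ξ x - ξstar x|) 1
        ≤ κ * ρ ^ ((a + i) + (b + j)) * |ξ x - ξstar x| := min_le_left _ _
      _ ≤ κ * ρ ^ ((a + i) + (b + j)) * Real.exp ((b:ℝ) * (lam/2)) :=
          mul_le_mul_of_nonneg_left htle (by positivity)
      _ = κ * (ρ ^ (((a + i) + (b + j) : ℕ) : ℝ) * ρ ^ (-(b:ℝ)/2)) := by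
          rw [hexp, Real.rpow_natCast, mul_assoc]
      _ = κ * ρ ^ ((((a + i) + (b + j) : ℕ) : ℝ) + (-(b:ℝ)/2)) := by
          rw [← Real.rpow_add hρ0]
      _ ≤ κ * ρ ^ ((((a:ℝ) + b)/2) + ((i:ℝ) + (j:ℝ))) := by
          apply mul_le_mul_of_nonneg_left _ hκ.le
          apply Real.rpow_le_rpow_of_exponent_ge hρ0 hρ1.le
          push_cast
          have : (0:ℝ) ≤ (a:ℝ) := Nat.cast_nonneg a
          linarith
      _ = (κ * ρ ^ (((a:ℝ) + b)/2)) * (ρ ^ i * ρ ^ j) := by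
          rw [Real.rpow_add hρ0, Real.rpow_add hρ0, Real.rpow_natCast, Real.rpow_natCast]
          ring
  have hTerm1 : (∑' i : ℕ, ∑' j : ℕ, ∫⁻ x in Eᶜ,
      ENNReal.ofReal (min (κ * ρ ^ ((a + i) + (b + j)) * |ξ x - ξstar x|) 1) ∂μ)
      ≤ ENNReal.ofReal ((κ * ((1 - ρ)⁻¹)^2) * ρ ^ (((a:ℝ) + b)/2)) := by
    have hle : ∀ i j : ℕ, (∫⁻ x in Eᶜ,
        ENNReal.ofReal (min (κ * ρ ^ ((a + i) + (b + j)) * |ξ x - ξstar x|) 1) ∂μ)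
        ≤ ENNReal.ofReal (κ * ρ ^ (((a:ℝ) + b)/2)) * (ENNReal.ofReal ρ) ^ i
            * (ENNReal.ofReal ρ) ^ j := by
      intro i j
      calc (∫⁻ x in Eᶜ,
          ENNReal.ofReal (min (κ * ρ ^ ((a + i) + (b + j)) * |ξ x - ξstar x|) 1) ∂μ)
          ≤ ∫⁻ _ in Eᶜ, ENNReal.ofReal ((κ * ρ ^ (((a:ℝ) + b)/2)) * (ρ ^ i * ρ ^ j)) ∂μ := by
            apply setLIntegral_mono measurable_const
            intro x hx
            exact ENNReal.ofReal_le_ofReal (hEc x hx i j)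
        _ = ENNReal.ofReal ((κ * ρ ^ (((a:ℝ) + b)/2)) * (ρ ^ i * ρ ^ j)) * μ Eᶜ := by
            rw [setLIntegral_const]
        _ ≤ ENNReal.ofReal ((κ * ρ ^ (((a:ℝ) + b)/2)) * (ρ ^ i * ρ ^ j)) * 1 :=
            mul_le_mul_right prob_le_one _
        _ = ENNReal.ofReal (κ * ρ ^ (((a:ℝ) + b)/2)) * (ENNReal.ofReal ρ) ^ i
            * (ENNReal.ofReal ρ) ^ j := by
            rw [mul_one, ENNReal.ofReal_mul (p := κ * ρ ^ (((a:ℝ) + b)/2)) (by positivity),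
              ENNReal.ofReal_mul (p := (ρ:ℝ) ^ i) (by positivity),
              ENNReal.ofReal_pow hρ0.le, ENNReal.ofReal_pow hρ0.le, ← mul_assoc]
    calc (∑' i : ℕ, ∑' j : ℕ, ∫⁻ x in Eᶜ,
        ENNReal.ofReal (min (κ * ρ ^ ((a + i) + (b + j)) * |ξ x - ξstar x|) 1) ∂μ)
        ≤ ∑' i : ℕ, ∑' j : ℕ, ENNReal.ofReal (κ * ρ ^ (((a:ℝ) + b)/2))
            * (ENNReal.ofReal ρ) ^ i * (ENNReal.ofReal ρ) ^ j :=
          ENNReal.tsum_le_tsum fun i => ENNReal.tsum_le_tsum fun j => hle i j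
      _ = ∑' i : ℕ, (ENNReal.ofReal (κ * ρ ^ (((a:ℝ) + b)/2)) * (ENNReal.ofReal ρ) ^ i)
            * (1 - ENNReal.ofReal ρ)⁻¹ := by
          refine tsum_congr fun i => ?_
          rw [ENNReal.tsum_mul_left, ENNReal.tsum_geometric]
      _ = (ENNReal.ofReal (κ * ρ ^ (((a:ℝ) + b)/2)) * (1 - ENNReal.ofReal ρ)⁻¹)
            * (1 - ENNReal.ofReal ρ)⁻¹ := by
          rw [ENNReal.tsum_mul_right, ENNReal.tsum_mul_left, ENNReal.tsum_geometric]
      _ ≤ ENNReal.ofReal ((κ * ((1 - ρ)⁻¹)^2) * ρ ^ (((a:ℝ) + b)/2)) := by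
          have hgeo : (1 - ENNReal.ofReal ρ)⁻¹ = ENNReal.ofReal ((1 - ρ)⁻¹) := by
            rw [← ENNReal.ofReal_one, ← ENNReal.ofReal_sub _ hρ0.le,
              ENNReal.ofReal_inv_of_pos h1ρ]
          rw [hgeo, ← ENNReal.ofReal_mul (by positivity), ← ENNReal.ofReal_mul (by positivity)]
          apply ENNReal.ofReal_le_ofReal
          have : κ * ρ ^ (((a:ℝ) + b)/2) * (1 - ρ)⁻¹ * (1 - ρ)⁻¹
              = (κ * ((1 - ρ)⁻¹)^2) * ρ ^ (((a:ℝ) + b)/2) := by ring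
          rw [this]
  -- part on E
  have hswap : (∑' i : ℕ, ∑' j : ℕ, ∫⁻ x in E,
      ENNReal.ofReal (min (κ * ρ ^ ((a + i) + (b + j)) * |ξ x - ξstar x|) 1) ∂μ)
      = ∫⁻ x in E, (∑' i : ℕ, ∑' j : ℕ,
        ENNReal.ofReal (min (κ * ρ ^ ((a + i) + (b + j)) * |ξ x - ξstar x|) 1)) ∂μ := by
    calc (∑' i : ℕ, ∑' j : ℕ, ∫⁻ x in E,
        ENNReal.ofReal (min (κ * ρ ^ ((a + i) + (b + j)) * |ξ x - ξstar x|) 1) ∂μ)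
        = ∑' i : ℕ, ∫⁻ x in E, (∑' j : ℕ,
            ENNReal.ofReal (min (κ * ρ ^ ((a + i) + (b + j)) * |ξ x - ξstar x|) 1)) ∂μ :=
          tsum_congr fun i => (lintegral_tsum fun j => (hFmeas _).aemeasurable).symm
      _ = _ := (lintegral_tsum fun i =>
          (Measurable.ennreal_tsum fun j => hFmeas _).aemeasurable).symm
  have hptE : ∀ x ∈ E, (∑' i : ℕ, ∑' j : ℕ,
      ENNReal.ofReal (min (κ * ρ ^ ((a + i) + (b + j)) * |ξ x - ξstar x|) 1))
      ≤ ENNReal.ofReal (2 * A2^2) + ENNReal.ofReal (2 / lam^2)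
          * ENNReal.ofReal ((Real.log |ξ x - ξstar x|) ^ 2) := by
    intro x hx
    have ht1 : 1 < |ξ x - ξstar x| := hEgt1 x hx
    have hlogpos : 0 < Real.log |ξ x - ξstar x| := hEpos x hx
    have hs : (0:ℝ) ≤ κ * |ξ x - ξstar x| := by positivity
    obtain ⟨m, hm1, hm2⟩ := choose_m hρ0 hρ1 hs
    rw [← hlamdef] at hm2
    have hred : ∀ i j : ℕ,
        ENNReal.ofReal (min (κ * ρ ^ ((a + i) + (b + j)) * |ξ x - ξstar x|) 1) ≤
        ENNReal.ofReal (min ((κ * |ξ x - ξstar x|) * ρ ^ (i + j)) 1) := by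
      intro i j
      apply ENNReal.ofReal_le_ofReal
      apply min_le_min _ le_rfl
      have hpow : ρ ^ ((a + i) + (b + j)) ≤ ρ ^ (i + j) :=
        pow_le_pow_of_le_one hρ0.le hρ1.le (by omega)
      calc κ * ρ ^ ((a + i) + (b + j)) * |ξ x - ξstar x|
          ≤ κ * ρ ^ (i + j) * |ξ x - ξstar x| :=
            mul_le_mul_of_nonneg_right (mul_le_mul_of_nonneg_left hpow hκ.le) (ht0 x)
        _ = (κ * |ξ x - ξstar x|) * ρ ^ (i + j) := by ring
    calc (∑' i : ℕ, ∑' j : ℕ,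
        ENNReal.ofReal (min (κ * ρ ^ ((a + i) + (b + j)) * |ξ x - ξstar x|) 1))
        ≤ ∑' i : ℕ, ∑' j : ℕ,
            ENNReal.ofReal (min ((κ * |ξ x - ξstar x|) * ρ ^ (i + j)) 1) :=
          ENNReal.tsum_le_tsum fun i => ENNReal.tsum_le_tsum fun j => hred i j
      _ ≤ ((m : ℝ≥0∞) + ENNReal.ofReal ((1 - ρ)⁻¹)) ^ 2 := double_sum_le hρ0 hρ1 hs hm1
      _ ≤ ENNReal.ofReal ((A2 + Real.log |ξ x - ξstar x| / lam) ^ 2) := by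
          rw [← ENNReal.ofReal_natCast m, ← ENNReal.ofReal_add (by positivity) (by positivity),
            ← ENNReal.ofReal_pow (by positivity)]
          apply ENNReal.ofReal_le_ofReal
          apply pow_le_pow_left₀ (by positivity)
          have hlogk : max (Real.log (κ * |ξ x - ξstar x|)) 0
              ≤ max (Real.log κ) 0 + Real.log |ξ x - ξstar x| := by
            apply max_le
            · rw [Real.log_mul hκ.ne' (by linarith)]
              have := le_max_left (Real.log κ) 0
              linarith
            · have := le_max_right (Real.log κ) 0
              linarith
          have hm3 : (m:ℝ) ≤ (max (Real.log κ) 0 + Real.log |ξ x - ξstar x|) / lam + 1 :=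
            hm2.trans (by linarith [(div_le_div_iff_of_pos_right hlam).2 hlogk])
          have hdiv : (max (Real.log κ) 0 + Real.log |ξ x - ξstar x|) / lam
              = max (Real.log κ) 0 / lam + Real.log |ξ x - ξstar x| / lam := add_div _ _ _
          rw [hA2def]
          rw [hdiv] at hm3
          linarith
      _ ≤ ENNReal.ofReal (2 * A2^2 + (2 / lam^2) * (Real.log |ξ x - ξstar x|) ^ 2) := by
          apply ENNReal.ofReal_le_ofReal
          have hu : (2 / lam^2) * (Real.log |ξ x - ξstar x|) ^ 2
              = 2 * (Real.log |ξ x - ξstar x| / lam) ^ 2 := by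
            field_simp
          rw [hu]
          nlinarith [sq_nonneg (A2 - Real.log |ξ x - ξstar x| / lam)]
      _ = ENNReal.ofReal (2 * A2^2) + ENNReal.ofReal (2 / lam^2)
            * ENNReal.ofReal ((Real.log |ξ x - ξstar x|) ^ 2) := by
          rw [ENNReal.ofReal_add (by positivity) (by positivity),
            ENNReal.ofReal_mul (p := 2 / lam^2) (by positivity)]
  have hTerm2 : (∑' i : ℕ, ∑' j : ℕ, ∫⁻ x in E,
      ENNReal.ofReal (min (κ * ρ ^ ((a + i) + (b + j)) * |ξ x - ξstar x|) 1) ∂μ)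
      ≤ ENNReal.ofReal (2 * A2^2) * μ E + ENNReal.ofReal (2 / lam^2) * I := by
    rw [hswap]
    calc (∫⁻ x in E, (∑' i : ℕ, ∑' j : ℕ,
        ENNReal.ofReal (min (κ * ρ ^ ((a + i) + (b + j)) * |ξ x - ξstar x|) 1)) ∂μ)
        ≤ ∫⁻ x in E, (ENNReal.ofReal (2 * A2^2) + ENNReal.ofReal (2 / lam^2)
            * ENNReal.ofReal ((Real.log |ξ x - ξstar x|) ^ 2)) ∂μ := by
          apply setLIntegral_mono
            (measurable_const.add (((hlog.pow_const 2).ennreal_ofReal).const_mul _))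
          exact hptE
      _ = ENNReal.ofReal (2 * A2^2) * μ E + ENNReal.ofReal (2 / lam^2) * I := by
          rw [lintegral_add_left measurable_const,
            lintegral_const_mul _ ((hlog.pow_const 2).ennreal_ofReal), setLIntegral_const,
            hIdef]
  have hmuE : ENNReal.ofReal (2 * A2^2) * μ E
      ≤ ENNReal.ofReal ((2 * A2^2) * ρ ^ (((a:ℝ) + b)/2))
        + ENNReal.ofReal (8 * A2^2 / lam^2) * I := by
    rcases Nat.eq_zero_or_pos b with hb | hb
    · have ha : a = 0 := by omega
      have hone : ρ ^ (((a:ℝ) + b)/2) = 1 := by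
        rw [ha, hb]
        norm_num
      refine le_trans ?_ le_self_add
      calc ENNReal.ofReal (2 * A2^2) * μ E ≤ ENNReal.ofReal (2 * A2^2) * 1 :=
            mul_le_mul_right prob_le_one _
        _ = ENNReal.ofReal ((2 * A2^2) * ρ ^ (((a:ℝ) + b)/2)) := by
            rw [mul_one, hone, mul_one]
    · have honeE : ∀ x ∈ E, (1:ℝ≥0∞) ≤ ENNReal.ofReal (4 / lam^2)
          * ENNReal.ofReal ((Real.log |ξ x - ξstar x|) ^ 2) := by
        intro x hx
        have h1 := hEprop x hx
        have hb1 : (1:ℝ) ≤ (b:ℝ) := by exact_mod_cast hb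
        have hl : lam/2 ≤ Real.log |ξ x - ξstar x| := by nlinarith
        rw [← ENNReal.ofReal_mul (by positivity), ← ENNReal.ofReal_one]
        apply ENNReal.ofReal_le_ofReal
        rw [div_mul_eq_mul_div, le_div_iff₀ (by positivity)]
        have := mul_self_le_mul_self (by positivity : (0:ℝ) ≤ lam/2) hl
        nlinarith
      have hmu : μ E ≤ ENNReal.ofReal (4 / lam^2) * I := by
        calc μ E = ∫⁻ _ in E, 1 ∂μ := (setLIntegral_one _).symm
          _ ≤ ∫⁻ x in E, ENNReal.ofReal (4 / lam^2)
              * ENNReal.ofReal ((Real.log |ξ x - ξstar x|) ^ 2) ∂μ :=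
            setLIntegral_mono (((hlog.pow_const 2).ennreal_ofReal).const_mul _) honeE
          _ = ENNReal.ofReal (4 / lam^2) * I := by
            rw [lintegral_const_mul _ ((hlog.pow_const 2).ennreal_ofReal), hIdef]
      refine le_trans ?_ le_add_self
      calc ENNReal.ofReal (2 * A2^2) * μ E
          ≤ ENNReal.ofReal (2 * A2^2) * (ENNReal.ofReal (4 / lam^2) * I) :=
            mul_le_mul_right hmu _
        _ = ENNReal.ofReal (8 * A2^2 / lam^2) * I := by
          rw [← mul_assoc, ← ENNReal.ofReal_mul (by positivity)]
          congr 2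
          field_simp
          ring
  have hmain : (∑' i : ℕ, T i)
      ≤ ENNReal.ofReal (K1 * ρ ^ (((a:ℝ) + b)/2)) + ENNReal.ofReal K2 * I := by
    rw [hΛsplit]
    have hρab : (0:ℝ) < ρ ^ (((a:ℝ) + b)/2) := Real.rpow_pos_of_pos hρ0 _
    calc _ ≤ (ENNReal.ofReal (2 * A2^2) * μ E + ENNReal.ofReal (2 / lam^2) * I)
          + ENNReal.ofReal ((κ * ((1 - ρ)⁻¹)^2) * ρ ^ (((a:ℝ) + b)/2)) := by
          exact add_le_add hTerm2 hTerm1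
      _ ≤ ((ENNReal.ofReal ((2 * A2^2) * ρ ^ (((a:ℝ) + b)/2))
            + ENNReal.ofReal (8 * A2^2 / lam^2) * I) + ENNReal.ofReal (2 / lam^2) * I)
          + ENNReal.ofReal ((κ * ((1 - ρ)⁻¹)^2) * ρ ^ (((a:ℝ) + b)/2)) := by
          gcongr
      _ = ENNReal.ofReal (K1 * ρ ^ (((a:ℝ) + b)/2)) + ENNReal.ofReal K2 * I := by
          rw [hK1def, hK2def]
          rw [show (κ * ((1 - ρ)⁻¹)^2 + 2 * A2^2) * ρ ^ (((a:ℝ) + b)/2)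
            = (2 * A2^2) * ρ ^ (((a:ℝ) + b)/2)
              + (κ * ((1 - ρ)⁻¹)^2) * ρ ^ (((a:ℝ) + b)/2) from by ring]
          rw [ENNReal.ofReal_add (by positivity) (by positivity),
            ENNReal.ofReal_add (by positivity) (by positivity), add_mul]
          ring
  -- divergence lemma
  have hdiv : I = ∞ → (∑' i : ℕ, T i) = ∞ := by
    intro hItop
    set C : ℝ := |Real.log κ| + lam * ((a:ℝ) + b) with hCdef
    have hC0 : 0 ≤ C := by positivity
    set M : ℝ := 2*C + 4*lam with hMdef
    have hM0 : 0 < M := by rw [hMdef]; linarith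
    set S : Set Ω := {x | M < Real.log |ξ x - ξstar x|} with hSdef
    have hSmeas : MeasurableSet S := measurableSet_lt measurable_const hlog
    have key : ∀ x ∈ S, ENNReal.ofReal (1/(16*lam^2))
        * ENNReal.ofReal ((Real.log |ξ x - ξstar x|) ^ 2)
        ≤ ∑' i : ℕ, ∑' j : ℕ,
            ENNReal.ofReal (min (κ * ρ ^ ((a + i) + (b + j)) * |ξ x - ξstar x|) 1) := by
      intro x hx
      rw [hSdef] at hx
      simp only [Set.mem_setOf_eq] at hx
      have hr : M < Real.log |ξ x - ξstar x| := hx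
      have hrpos : 0 < Real.log |ξ x - ξstar x| := lt_trans hM0 hr
      have htpos : 0 < |ξ x - ξstar x| := by
        rcases (ht0 x).eq_or_lt with h | h
        · rw [← h] at hrpos
          rw [Real.log_zero] at hrpos
          exact absurd hrpos (lt_irrefl _)
        · exact h
      set n : ℕ := ⌊(Real.log |ξ x - ξstar x| - C)/(2*lam)⌋₊ with hndef
      have hrC : 0 ≤ Real.log |ξ x - ξstar x| - C := by rw [hMdef] at hr; linarith
      have hn1 : (n:ℝ) * (2*lam) ≤ Real.log |ξ x - ξstar x| - C := by
        have h := Nat.floor_le (show (0:ℝ) ≤ (Real.log |ξ x - ξstar x| - C)/(2*lam) by positivity)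
        calc (n:ℝ)*(2*lam) ≤ ((Real.log |ξ x - ξstar x| - C)/(2*lam))*(2*lam) :=
              mul_le_mul_of_nonneg_right h (by positivity)
          _ = Real.log |ξ x - ξstar x| - C := by field_simp
      have hn2 : Real.log |ξ x - ξstar x| / (4*lam) ≤ (n:ℝ) := by
        have h := Nat.sub_one_lt_floor ((Real.log |ξ x - ξstar x| - C)/(2*lam))
        have h2 : Real.log |ξ x - ξstar x| / (4*lam)
            ≤ (Real.log |ξ x - ξstar x| - C)/(2*lam) - 1 := by
          have hh : (Real.log |ξ x - ξstar x| - C)/(2*lam) - 1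
              = (Real.log |ξ x - ξstar x| - C - 2*lam)/(2*lam) := by field_simp
          rw [hh, div_le_div_iff₀ (by positivity) (by positivity)]
          rw [hMdef] at hr
          nlinarith
        linarith
      have hone : ∀ i < n, ∀ j < n,
          min (κ * ρ ^ ((a + i) + (b + j)) * |ξ x - ξstar x|) 1 = 1 := by
        intro i hi j hj
        apply min_eq_right
        have hij : (i:ℝ) + (j:ℝ) ≤ 2*(n:ℝ) - 2 := by
          have h1 : (i:ℝ) + 1 ≤ n := by exact_mod_cast hi
          have h2 : (j:ℝ) + 1 ≤ n := by exact_mod_cast hj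
          linarith
        have hlamij : lam * ((i:ℝ)+(j:ℝ)) ≤ Real.log |ξ x - ξstar x| - C - 2*lam := by
          have e0 : lam * ((i:ℝ)+(j:ℝ)) ≤ lam * (2*(n:ℝ)-2) :=
            mul_le_mul_of_nonneg_left hij hlam.le
          have e1 : lam * (2*(n:ℝ)-2) = (n:ℝ)*(2*lam) - 2*lam := by ring
          linarith
        have hCab : lam * ((a:ℝ)+(b:ℝ)) = C - |Real.log κ| := by rw [hCdef]; ring
        have hlog0 : 0 ≤ Real.log (κ * ρ ^ ((a + i) + (b + j)) * |ξ x - ξstar x|) := by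
          rw [Real.log_mul (by positivity) htpos.ne', Real.log_mul hκ.ne' (by positivity),
            Real.log_pow]
          have hlr : Real.log ρ = -lam := by rw [hlamdef]; ring
          rw [hlr]
          have hk : -|Real.log κ| ≤ Real.log κ := neg_abs_le _
          have hcast : (((a + i) + (b + j) : ℕ) : ℝ) = (a:ℝ) + (i:ℝ) + ((b:ℝ) + (j:ℝ)) := by
            push_cast; ring
          rw [hcast]
          nlinarith [hlamij, hCab, hk]
        have hprodpos : 0 < κ * ρ ^ ((a + i) + (b + j)) * |ξ x - ξstar x| := by positivity
        calc (1:ℝ) = Real.exp 0 := Real.exp_zero.symm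
          _ ≤ Real.exp (Real.log (κ * ρ ^ ((a + i) + (b + j)) * |ξ x - ξstar x|)) :=
            Real.exp_le_exp.2 hlog0
          _ = _ := Real.exp_log hprodpos
      have hgrid : ((n:ℝ≥0∞))^2 ≤ ∑' i : ℕ, ∑' j : ℕ,
          ENNReal.ofReal (min (κ * ρ ^ ((a + i) + (b + j)) * |ξ x - ξstar x|) 1) := by
        have hrow : ∀ i < n, (n : ℝ≥0∞) ≤ ∑' j : ℕ,
            ENNReal.ofReal (min (κ * ρ ^ ((a + i) + (b + j)) * |ξ x - ξstar x|) 1) := by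
          intro i hi
          calc (n:ℝ≥0∞) = ∑ _j ∈ Finset.range n, (1:ℝ≥0∞) := by simp
            _ = ∑ j ∈ Finset.range n,
                ENNReal.ofReal (min (κ * ρ ^ ((a + i) + (b + j)) * |ξ x - ξstar x|) 1) := by
                refine Finset.sum_congr rfl fun j hj => ?_
                rw [hone i hi j (Finset.mem_range.1 hj), ENNReal.ofReal_one]
            _ ≤ _ := ENNReal.sum_le_tsum _
        calc ((n:ℝ≥0∞))^2 = ∑ _i ∈ Finset.range n, (n:ℝ≥0∞) := by
              simp [sq, Finset.sum_const, Finset.card_range]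
          _ ≤ ∑ i ∈ Finset.range n, ∑' j : ℕ,
              ENNReal.ofReal (min (κ * ρ ^ ((a + i) + (b + j)) * |ξ x - ξstar x|) 1) :=
            Finset.sum_le_sum fun i hi => hrow i (Finset.mem_range.1 hi)
          _ ≤ _ := ENNReal.sum_le_tsum _
      refine le_trans ?_ hgrid
      rw [← ENNReal.ofReal_mul (by positivity)]
      have hcast2 : ((n:ℝ≥0∞))^2 = ENNReal.ofReal ((n:ℝ)^2) := by
        rw [ENNReal.ofReal_pow (by positivity), ENNReal.ofReal_natCast]
      rw [hcast2]
      apply ENNReal.ofReal_le_ofReal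
      have h0 : 0 ≤ Real.log |ξ x - ξstar x| / (4*lam) := by positivity
      have hsq := mul_self_le_mul_self h0 hn2
      calc (1/(16*lam^2)) * (Real.log |ξ x - ξstar x|)^2
          = (Real.log |ξ x - ξstar x| / (4*lam)) * (Real.log |ξ x - ξstar x| / (4*lam)) := by
            field_simp
            ring
        _ ≤ (n:ℝ)*(n:ℝ) := hsq
        _ = (n:ℝ)^2 := (sq _).symm
    have hJ : (∫⁻ x in S, ENNReal.ofReal ((Real.log |ξ x - ξstar x|) ^ 2) ∂μ) = ∞ := by
      by_contra hfin
      have hb : I ≤ (∫⁻ x in S, ENNReal.ofReal ((Real.log |ξ x - ξstar x|) ^ 2) ∂μ)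
          + ENNReal.ofReal (M^2) := by
        rw [hIdef]
        calc ∫⁻ x in E, ENNReal.ofReal ((Real.log |ξ x - ξstar x|) ^ 2) ∂μ
            ≤ ∫⁻ x in E, (S.indicator
                (fun x => ENNReal.ofReal ((Real.log |ξ x - ξstar x|) ^ 2)) x
                + ENNReal.ofReal (M^2)) ∂μ := by
              apply setLIntegral_mono
                ((((hlog.pow_const 2).ennreal_ofReal).indicator hSmeas).add measurable_const)
              intro x hx
              by_cases hxS : x ∈ S
              · rw [Pi.add_apply, Set.indicator_of_mem hxS]
                exact le_self_add
              · rw [Pi.add_apply, Set.indicator_of_notMem hxS, zero_add]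
                apply ENNReal.ofReal_le_ofReal
                have hxE := hEprop x hx
                have hnotS : Real.log |ξ x - ξstar x| ≤ M := by
                  rw [hSdef] at hxS
                  simp only [Set.mem_setOf_eq, not_lt] at hxS
                  exact hxS
                have hlognn : 0 ≤ Real.log |ξ x - ξstar x| := by
                  have : (0:ℝ) ≤ (b:ℝ) * (lam/2) := by positivity
                  linarith
                nlinarith
          _ = (∫⁻ x in E, S.indicator
                (fun x => ENNReal.ofReal ((Real.log |ξ x - ξstar x|) ^ 2)) x ∂μ)
              + ENNReal.ofReal (M^2) * μ E := by
              rw [lintegral_add_right _ measurable_const, setLIntegral_const]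
          _ ≤ (∫⁻ x, S.indicator
                (fun x => ENNReal.ofReal ((Real.log |ξ x - ξstar x|) ^ 2)) x ∂μ)
              + ENNReal.ofReal (M^2) * 1 := by
              gcongr
              · exact Measure.restrict_le_self
              · exact prob_le_one
          _ = _ := by rw [lintegral_indicator hSmeas, mul_one]
      rw [hItop] at hb
      have hne : (∫⁻ x in S, ENNReal.ofReal ((Real.log |ξ x - ξstar x|) ^ 2) ∂μ)
          + ENNReal.ofReal (M^2) ≠ ∞ := ENNReal.add_ne_top.2 ⟨hfin, ENNReal.ofReal_ne_top⟩
      exact hne (top_le_iff.1 hb)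
    have hΛeq : (∑' i : ℕ, T i) = ∫⁻ x, (∑' i : ℕ, ∑' j : ℕ,
        ENNReal.ofReal (min (κ * ρ ^ ((a + i) + (b + j)) * |ξ x - ξstar x|) 1)) ∂μ := by
      calc (∑' i : ℕ, T i)
          = ∑' i : ℕ, ∫⁻ x, (∑' j : ℕ,
              ENNReal.ofReal (min (κ * ρ ^ ((a + i) + (b + j)) * |ξ x - ξstar x|) 1)) ∂μ := by
            refine tsum_congr fun i => ?_
            simp only [hTdef, hHdef]
            exact (lintegral_tsum fun j => (hfmeas _).ennreal_ofReal.aemeasurable).symm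
        _ = _ := (lintegral_tsum fun i =>
            (Measurable.ennreal_tsum fun j => hFmeas _).aemeasurable).symm
    rw [hΛeq]
    have hchain : (⊤:ℝ≥0∞) ≤ ∫⁻ x, (∑' i : ℕ, ∑' j : ℕ,
        ENNReal.ofReal (min (κ * ρ ^ ((a + i) + (b + j)) * |ξ x - ξstar x|) 1)) ∂μ := by
      have hc0 : ENNReal.ofReal (1/(16*lam^2)) ≠ 0 :=
        (ENNReal.ofReal_pos.2 (by positivity)).ne'
      calc (⊤:ℝ≥0∞) = ENNReal.ofReal (1/(16*lam^2))
            * (∫⁻ x in S, ENNReal.ofReal ((Real.log |ξ x - ξstar x|) ^ 2) ∂μ) := by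
            rw [hJ, ENNReal.mul_top hc0]
        _ = ∫⁻ x in S, ENNReal.ofReal (1/(16*lam^2))
            * ENNReal.ofReal ((Real.log |ξ x - ξstar x|) ^ 2) ∂μ :=
          (lintegral_const_mul _ ((hlog.pow_const 2).ennreal_ofReal)).symm
        _ ≤ ∫⁻ x in S, (∑' i : ℕ, ∑' j : ℕ,
            ENNReal.ofReal (min (κ * ρ ^ ((a + i) + (b + j)) * |ξ x - ξstar x|) 1)) ∂μ :=
          setLIntegral_mono
            (Measurable.ennreal_tsum fun i => Measurable.ennreal_tsum fun j => hFmeas _) key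
        _ ≤ _ := setLIntegral_le_lintegral _ _
    exact top_le_iff.1 hchain
  -- final assembly
  by_cases hI : I = ∞
  · have hIto : I.toReal = 0 := by rw [hI]; exact ENNReal.toReal_top
    have hΛtop := hdiv hI
    have hlhs0 : (∑' i : ℕ, (T i).toReal) = 0 := by
      by_cases hT : ∀ i, T i ≠ ∞
      · rw [← ENNReal.tsum_toReal_eq hT, hΛtop, ENNReal.toReal_top]
      · push_neg at hT
        obtain ⟨i₀, hi₀⟩ := hT
        have hall : ∀ i, T i = ∞ := by
          intro i
          rcases le_total i i₀ with h | h
          · have hle : T i₀ ≤ T i := by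
              rw [hTdef]
              exact ENNReal.tsum_le_tsum fun j => hHanti (by omega)
            rw [hi₀] at hle
            exact top_le_iff.1 hle
          · by_contra hne
            have hdecomp : T i₀ = (∑ j ∈ Finset.range (i - i₀), H ((a + i₀) + (b + j))) + T i := by
              simp only [hTdef]
              rw [ennreal_tsum_shift (fun j => H ((a + i₀) + (b + j))) (i - i₀)]
              congr 1
              refine tsum_congr fun j => ?_
              congr 1
              omega
            rw [hdecomp] at hi₀
            have hfin1 : (∑ j ∈ Finset.range (i - i₀), H ((a + i₀) + (b + j))) ≠ ∞ := by
              refine (lt_of_le_of_lt (Finset.sum_le_sum fun j _ => hH1 _) ?_).ne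
              rw [Finset.sum_const, Finset.card_range, nsmul_eq_mul, mul_one]
              exact ENNReal.natCast_lt_top _
            exact (ENNReal.add_ne_top.2 ⟨hfin1, hne⟩) hi₀
        calc (∑' i : ℕ, (T i).toReal) = ∑' _i : ℕ, (0:ℝ) :=
              tsum_congr fun i => by rw [hall i, ENNReal.toReal_top]
          _ = 0 := tsum_zero
    rw [hlhs0, hIto]
    have hρpos : 0 < ρ ^ (((a:ℝ) + b)/2) := Real.rpow_pos_of_pos hρ0 _
    nlinarith [mul_pos (show (0:ℝ) < K1 + K2 + 1 by linarith) hρpos]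
  · have hbne : ENNReal.ofReal (K1 * ρ ^ (((a:ℝ) + b)/2)) + ENNReal.ofReal K2 * I ≠ ∞ :=
      ENNReal.add_ne_top.2 ⟨ENNReal.ofReal_ne_top,
        ENNReal.mul_ne_top ENNReal.ofReal_ne_top hI⟩
    have hfin : (∑' i : ℕ, T i) ≠ ∞ := ne_top_of_le_ne_top hbne hmain
    have hTfin : ∀ i, T i ≠ ∞ := fun i => ne_top_of_le_ne_top hfin (ENNReal.le_tsum i)
    rw [← ENNReal.tsum_toReal_eq hTfin]
    have h1 : (∑' i : ℕ, T i).toReal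
        ≤ (ENNReal.ofReal (K1 * ρ ^ (((a:ℝ) + b)/2)) + ENNReal.ofReal K2 * I).toReal :=
      ENNReal.toReal_mono hbne hmain
    refine h1.trans ?_
    have heq : (ENNReal.ofReal (K1 * ρ ^ (((a:ℝ) + b)/2)) + ENNReal.ofReal K2 * I).toReal
        = K1 * ρ ^ (((a:ℝ) + b)/2) + K2 * I.toReal := by
      rw [ENNReal.toReal_add ENNReal.ofReal_ne_top
          (ENNReal.mul_ne_top ENNReal.ofReal_ne_top hI),
        ENNReal.toReal_mul,
        ENNReal.toReal_ofReal (mul_nonneg hK1pos.le (Real.rpow_pos_of_pos hρ0 (((a:ℝ) + b)/2)).le),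
        ENNReal.toReal_ofReal hK2pos.le]
    rw [heq]
    have h2 : 0 ≤ I.toReal := ENNReal.toReal_nonneg
    have hρpos : 0 < ρ ^ (((a:ℝ) + b)/2) := Real.rpow_pos_of_pos hρ0 _
    exact add_le_add
      (mul_le_mul_of_nonneg_right (by linarith) hρpos.le)
      (mul_le_mul_of_nonneg_right (by linarith) h2)
end

section
/- Let (γ(k))_{k ≥ 0} be a nonincreasing sequence of nonnegative reals and let d ≥ 1 be an integer. If ∑_{k ≥ 1} k^{d-1} γ(k) < ∞, then ∑_{i_1 ≥ 0} ⋯ ∑_{i_d ≥ 0} min(γ(i_1), …, γ(i_d)) < ∞. -/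
lemma aux_pow (m n : ℕ) : (m + 1) ^ (n + 1) ≤ m ^ (n + 1) + (n + 1) * (m + 1) ^ n := by
  induction n with
  | zero => simp
  | succ n ih =>
    have h1 : (m + 1) ^ (n + 2) = (m + 1) * (m + 1) ^ (n + 1) := by ring
    have h2 : (m + 1) * (m + 1) ^ (n + 1) ≤ (m + 1) * (m ^ (n + 1) + (n + 1) * (m + 1) ^ n) :=
      Nat.mul_le_mul_left _ ih
    have h3 : m ^ (n + 1) ≤ (m + 1) ^ (n + 1) := Nat.pow_le_pow_left (Nat.le_succ m) _
    calc (m + 1) ^ (n + 2) ≤ (m + 1) * (m ^ (n + 1) + (n + 1) * (m + 1) ^ n) := by rw [h1]; exact h2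
      _ = m ^ (n + 2) + m ^ (n + 1) + (n + 1) * (m + 1) ^ (n + 1) := by ring
      _ ≤ m ^ (n + 2) + (m + 1) ^ (n + 1) + (n + 1) * (m + 1) ^ (n + 1) := by
          exact Nat.add_le_add_right (Nat.add_le_add_left h3 _) _
      _ = m ^ (n + 2) + (n + 2) * (m + 1) ^ (n + 1) := by ring

theorem stmt_14 (γ : ℕ → ℝ) (hγ0 : ∀ k, 0 ≤ γ k) (hγanti : Antitone γ)
    (d : ℕ) (hd : 1 ≤ d)
    (hsum : Summable fun k : ℕ => (k : ℝ) ^ (d - 1) * γ k) :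
    Summable fun i : Fin d → ℕ =>
      Finset.univ.inf' ⟨⟨0, hd⟩, Finset.mem_univ _⟩ fun j => γ (i j) := by
  obtain ⟨n, rfl⟩ : ∃ n, d = n + 1 := ⟨d - 1, (Nat.succ_pred_eq_of_pos hd).symm⟩
  set d := n + 1 with hdd
  have hne : (Finset.univ : Finset (Fin d)).Nonempty := ⟨⟨0, hd⟩, Finset.mem_univ _⟩
  set M : (Fin d → ℕ) → ℕ := fun i => Finset.univ.sup' hne i with hM
  -- the inf of γ over the tuple equals γ of the max coordinate
  have hinf : ∀ i : Fin d → ℕ,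
      (Finset.univ.inf' ⟨⟨0, hd⟩, Finset.mem_univ _⟩ fun j => γ (i j)) = γ (M i) := by
    intro i
    apply le_antisymm
    · obtain ⟨j, _, hj⟩ := Finset.exists_mem_eq_sup' hne i
      exact (Finset.inf'_le _ (Finset.mem_univ j)).trans (le_of_eq (by rw [hM]; simp [hj]))
    · exact Finset.le_inf' _ _ fun j _ => hγanti (Finset.le_sup' i (Finset.mem_univ j))
  -- the majorant sequence G
  set G : ℕ → ℝ := fun m => ((d : ℝ) * (m + 1) ^ n) * γ m with hG
  have hG0 : ∀ m, 0 ≤ G m := by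
    intro m
    exact mul_nonneg (mul_nonneg (by positivity) (by positivity)) (hγ0 m)
  have hGsum : Summable G := by
    rw [← summable_nat_add_iff 1]
    have hmaj : Summable fun m : ℕ => ((d : ℝ) * 2 ^ n) * (((m + 1 : ℕ) : ℝ) ^ n * γ (m + 1)) := by
      have := (summable_nat_add_iff 1).mpr hsum
      simpa [hdd] using this.mul_left ((d : ℝ) * 2 ^ n)
    apply Summable.of_nonneg_of_le (fun m => hG0 _) _ hmaj
    intro m
    have h1 : ((m + 1 : ℕ) + 1 : ℝ) ≤ 2 * ((m + 1 : ℕ) : ℝ) := by push_cast; linarith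
    have h2 : ((m + 1 : ℕ) + 1 : ℝ) ^ n ≤ 2 ^ n * ((m + 1 : ℕ) : ℝ) ^ n := by
      calc ((m + 1 : ℕ) + 1 : ℝ) ^ n ≤ (2 * ((m + 1 : ℕ) : ℝ)) ^ n :=
            pow_le_pow_left₀ (by positivity) h1 n
        _ = 2 ^ n * ((m + 1 : ℕ) : ℝ) ^ n := mul_pow _ _ _
    calc G (m + 1) = (d : ℝ) * (((m + 1 : ℕ) + 1 : ℝ) ^ n) * γ (m + 1) := by
          push_cast [hG]; ring
      _ ≤ (d : ℝ) * (2 ^ n * ((m + 1 : ℕ) : ℝ) ^ n) * γ (m + 1) := by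
          apply mul_le_mul_of_nonneg_right _ (hγ0 _)
          exact mul_le_mul_of_nonneg_left h2 (by positivity)
      _ = ((d : ℝ) * 2 ^ n) * (((m + 1 : ℕ) : ℝ) ^ n * γ (m + 1)) := by ring
  -- bound all partial sums by the tsum of G
  have key : ∀ u : Finset (Fin d → ℕ), ∑ i ∈ u, γ (M i) ≤ ∑' m, G m := by
    intro u
    set N : ℕ := u.sup M with hN
    set S : Finset (Fin d → ℕ) := Fintype.piFinset fun _ => Finset.range (N + 1) with hS
    have husub : u ⊆ S := by
      intro i hi
      rw [hS, Fintype.mem_piFinset]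
      intro j
      rw [Finset.mem_range, Nat.lt_succ_iff]
      exact (Finset.le_sup' i (Finset.mem_univ j)).trans (Finset.le_sup (f := M) hi)
    have h1 : ∑ i ∈ u, γ (M i) ≤ ∑ i ∈ S, γ (M i) :=
      Finset.sum_le_sum_of_subset_of_nonneg husub fun i _ _ => hγ0 _
    have hmap : ∀ i ∈ S, M i ∈ Finset.range (N + 1) := by
      intro i hi
      rw [Finset.mem_range, Nat.lt_succ_iff]
      apply Finset.sup'_le
      intro j _
      have := (Fintype.mem_piFinset.mp hi) j
      rw [Finset.mem_range, Nat.lt_succ_iff] at this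
      exact this
    have h2 : ∑ i ∈ S, γ (M i)
        = ∑ m ∈ Finset.range (N + 1), ∑ i ∈ S.filter (fun i => M i = m), γ (M i) :=
      (Finset.sum_fiberwise_of_maps_to hmap _).symm
    have h3 : ∀ m ∈ Finset.range (N + 1),
        ∑ i ∈ S.filter (fun i => M i = m), γ (M i) ≤ G m := by
      intro m hm
      rw [Finset.mem_range, Nat.lt_succ_iff] at hm
      have hfib : S.filter (fun i => M i = m)
          = (Fintype.piFinset fun _ : Fin d => Finset.range (m + 1)) \
            (Fintype.piFinset fun _ : Fin d => Finset.range m) := by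
        ext i
        simp only [Finset.mem_filter, Finset.mem_sdiff, Fintype.mem_piFinset, Finset.mem_range,
          hS, Nat.lt_succ_iff]
        constructor
        · rintro ⟨-, hMi⟩
          refine ⟨fun j => hMi ▸ Finset.le_sup' i (Finset.mem_univ j), fun hall => ?_⟩
          have : M i < m := Finset.sup'_lt_iff hne |>.mpr fun j _ => hall j
          omega
        · rintro ⟨hle, hnlt⟩
          have hMle : M i ≤ m := Finset.sup'_le _ _ fun j _ => hle j
          have hMge : ¬ M i < m := fun h =>
            hnlt fun j => lt_of_le_of_lt (Finset.le_sup' i (Finset.mem_univ j)) h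
          have hMi : M i = m := by omega
          exact ⟨fun j => (hle j).trans hm, hMi⟩
      have hsub : (Fintype.piFinset fun _ : Fin d => Finset.range m) ⊆
          (Fintype.piFinset fun _ : Fin d => Finset.range (m + 1)) := by
        intro i hi
        rw [Fintype.mem_piFinset] at hi ⊢
        exact fun j => Finset.range_subset_range.mpr (Nat.le_succ m) (hi j)
      have hcard : (S.filter (fun i => M i = m)).card = (m + 1) ^ d - m ^ d := by
        rw [hfib, Finset.card_sdiff_of_subset hsub, Fintype.card_piFinset, Fintype.card_piFinset]
        simp
      have hsumconst : ∑ i ∈ S.filter (fun i => M i = m), γ (M i)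
          = ((m + 1) ^ d - m ^ d : ℕ) * γ m := by
        rw [Finset.sum_congr rfl (fun i hi => by
          rw [(Finset.mem_filter.mp hi).2]), Finset.sum_const, hcard, nsmul_eq_mul]
      rw [hsumconst]
      have hnat : ((m + 1) ^ d - m ^ d : ℕ) ≤ d * (m + 1) ^ n := by
        have := aux_pow m n
        rw [hdd]
        omega
      have hcast : (((m + 1) ^ d - m ^ d : ℕ) : ℝ) ≤ (d : ℝ) * ((m : ℝ) + 1) ^ n := by
        calc (((m + 1) ^ d - m ^ d : ℕ) : ℝ) ≤ ((d * (m + 1) ^ n : ℕ) : ℝ) := by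
              exact_mod_cast hnat
          _ = (d : ℝ) * ((m : ℝ) + 1) ^ n := by push_cast; ring
      exact mul_le_mul_of_nonneg_right hcast (hγ0 m)
    calc ∑ i ∈ u, γ (M i) ≤ ∑ i ∈ S, γ (M i) := h1
      _ = ∑ m ∈ Finset.range (N + 1), ∑ i ∈ S.filter (fun i => M i = m), γ (M i) := h2
      _ ≤ ∑ m ∈ Finset.range (N + 1), G m := Finset.sum_le_sum h3
      _ ≤ ∑' m, G m := Summable.sum_le_tsum _ (fun m _ => hG0 m) hGsum
  have := summable_of_sum_le (f := fun i : Fin d → ℕ => γ (M i)) (c := ∑' m, G m)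
    (fun i => hγ0 _) key
  exact this.congr fun i => (hinf i).symm
end
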